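/- For every positive definite quadratic form Q in 2 variables, the packing-covering constant satisfies γ(Q) ≥ 2/√3 = 1.1547…, with equality attained by the form Q_{A*_2}; i.e., γ_2 = 2/√3 (Ryshkov's theorem). -/

import Mathlib

open Matrix

noncomputable section

/-- `Q[x] = xᵀ Q x`. -/
def quadForm {d : ℕ} (Q : Matrix (Fin d) (Fin d) ℝ) (x : Fin d → ℝ) : ℝ :=
  x ⬝ᵥ (Q *ᵥ x)

/-- Coercion of an integer vector to a real vector. -/
def intCast {d : ℕ} (v : Fin d → ℤ) : Fin d → ℝ := fun i => (v i : ℝ)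

/-- A positive definite quadratic form: a symmetric positive definite real matrix. -/
def IsPQF {d : ℕ} (Q : Matrix (Fin d) (Fin d) ℝ) : Prop :=
  Q.IsSymm ∧ Q.PosDef

/-- The homogeneous minimum `λ(Q) = min {Q[v] : v ∈ ℤ^d \ {0}}`. -/
def homMin {d : ℕ} (Q : Matrix (Fin d) (Fin d) ℝ) : ℝ :=
  sInf {r | ∃ v : Fin d → ℤ, v ≠ 0 ∧ r = quadForm Q (intCast v)}

/-- The set of minimal vectors `Min(Q)`. -/
def minVecs {d : ℕ} (Q : Matrix (Fin d) (Fin d) ℝ) : Set (Fin d → ℤ) :=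
  {v | v ≠ 0 ∧ quadForm Q (intCast v) = homMin Q}

/-- The inhomogeneous minimum `μ(Q) = max_{x ∈ ℝ^d} min_{v ∈ ℤ^d} Q[x - v]`. -/
def inhomMin {d : ℕ} (Q : Matrix (Fin d) (Fin d) ℝ) : ℝ :=
  ⨆ x : Fin d → ℝ, ⨅ v : Fin d → ℤ, quadForm Q (x - intCast v)

/-- `κ_d`, the volume of the `d`-dimensional Euclidean unit ball. -/
def ballVol (d : ℕ) : ℝ :=
  (MeasureTheory.volume (Metric.ball (0 : EuclideanSpace ℝ (Fin d)) 1)).toReal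

/-- The packing density `δ(Q)`. -/
def packDensity {d : ℕ} (Q : Matrix (Fin d) (Fin d) ℝ) : ℝ :=
  Real.sqrt (homMin Q ^ d / Q.det) * ballVol d / 2 ^ d

/-- The covering density `Θ(Q)`. -/
def covDensity {d : ℕ} (Q : Matrix (Fin d) (Fin d) ℝ) : ℝ :=
  Real.sqrt (inhomMin Q ^ d / Q.det) * ballVol d

/-- The packing-covering constant `γ(Q)`. -/
def pcConst {d : ℕ} (Q : Matrix (Fin d) (Fin d) ℝ) : ℝ :=
  2 * Real.sqrt (inhomMin Q / homMin Q)

/-- `Q` is perfect: it is the unique symmetric matrix `Q'` with `Q'[v] = λ(Q)`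
for all `v ∈ Min(Q)`. -/
def IsPerfectForm {d : ℕ} (Q : Matrix (Fin d) (Fin d) ℝ) : Prop :=
  ∀ Q' : Matrix (Fin d) (Fin d) ℝ, Q'.IsSymm →
    (∀ v ∈ minVecs Q, quadForm Q' (intCast v) = homMin Q) → Q' = Q

/-- `Q` is eutactic: `Q⁻¹ = Σ_{v ∈ Min(Q)} c_v · v vᵀ` with all `c_v > 0`. -/
def IsEutacticForm {d : ℕ} (Q : Matrix (Fin d) (Fin d) ℝ) : Prop :=
  ∃ (s : Finset (Fin d → ℤ)) (c : (Fin d → ℤ) → ℝ),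
    (s : Set (Fin d → ℤ)) = minVecs Q ∧ (∀ v ∈ s, 0 < c v) ∧
    Q⁻¹ = ∑ v ∈ s, c v • vecMulVec (intCast v) (intCast v)

/-- `Q` is extreme: a local maximum of the packing density among PQFs. -/
def IsExtremeForm {d : ℕ} (Q : Matrix (Fin d) (Fin d) ℝ) : Prop :=
  ∃ ε > (0 : ℝ), ∀ Q' : Matrix (Fin d) (Fin d) ℝ, IsPQF Q' →
    (∀ i j, |Q' i j - Q i j| < ε) → packDensity Q' ≤ packDensity Q

/-- The form `Q_{A*_d}` with diagonal entries `d` and off-diagonal entries `-1`. -/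
def QAstar (d : ℕ) : Matrix (Fin d) (Fin d) ℝ :=
  Matrix.of fun i j => if i = j then (d : ℝ) else -1
namespace Ry

lemma quadForm_eq (Q : Matrix (Fin 2) (Fin 2) ℝ) (x : Fin 2 → ℝ) :
    quadForm Q x = Q 0 0 * (x 0 * x 0) + Q 0 1 * (x 0 * x 1) + Q 1 0 * (x 1 * x 0)
      + Q 1 1 * (x 1 * x 1) := by
  simp [quadForm, dotProduct, Matrix.mulVec, Fin.sum_univ_two]; ring

section
variable {Q : Matrix (Fin 2) (Fin 2) ℝ}

lemma hsym (hQ : IsPQF Q) : Q 1 0 = Q 0 1 := hQ.1.apply 0 1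

lemma posdef_apply (hQ : IsPQF Q) {x : Fin 2 → ℝ} (hx : x ≠ 0) : 0 < quadForm Q x := by
  have := hQ.2.dotProduct_mulVec_pos hx
  simpa [quadForm, dotProduct] using this

end
end Ry
namespace Ry2
open Ry

section
variable {Q : Matrix (Fin 2) (Fin 2) ℝ}

lemma e0_ne : (![1,0] : Fin 2 → ℝ) ≠ 0 := by
  intro h; have := congrFun h 0; simp at this

lemma ha (hQ : IsPQF Q) : 0 < Q 0 0 := by
  have := posdef_apply hQ e0_ne
  rw [quadForm_eq] at this
  norm_num at this
  linarith

lemma hc (hQ : IsPQF Q) : 0 < Q 1 1 := by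
  have h1 : (![0,1] : Fin 2 → ℝ) ≠ 0 := by intro h; have := congrFun h 1; simp at this
  have := posdef_apply hQ h1
  rw [quadForm_eq] at this
  norm_num at this; exact this

/-- The eigenvalue lower-bound constant. -/
def c0 (Q : Matrix (Fin 2) (Fin 2) ℝ) : ℝ :=
  (Q 0 0 * Q 1 1 - Q 0 1 * Q 0 1) / (Q 0 0 + Q 1 1)

lemma hdet (hQ : IsPQF Q) : 0 < Q 0 0 * Q 1 1 - Q 0 1 * Q 0 1 := by
  by_contra h
  push_neg at h
  have hx : (![Q 0 1, - Q 0 0] : Fin 2 → ℝ) ≠ 0 := by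
    intro hz
    have h1 := congrFun hz 1
    have h2 := ha hQ
    simp at h1
    rw [h1] at h2
    exact lt_irrefl _ h2
  have h2 := posdef_apply hQ hx
  rw [quadForm_eq, hsym hQ] at h2
  norm_num at h2
  nlinarith [ha hQ]

lemma c0_pos (hQ : IsPQF Q) : 0 < c0 Q :=
  div_pos (hdet hQ) (by nlinarith [ha hQ, hc hQ])

lemma quad_lower (hQ : IsPQF Q) (x : Fin 2 → ℝ) :
    c0 Q * (x 0 ^ 2 + x 1 ^ 2) ≤ quadForm Q x := by
  rw [quadForm_eq, hsym hQ, c0, div_mul_eq_mul_div, div_le_iff₀ (by nlinarith [ha hQ, hc hQ])]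
  nlinarith [sq_nonneg (Q 0 0 * x 0 + Q 0 1 * x 1), sq_nonneg (Q 0 1 * x 0 + Q 1 1 * x 1)]

lemma quad_nonneg (hQ : IsPQF Q) (x : Fin 2 → ℝ) : 0 ≤ quadForm Q x := by
  rcases eq_or_ne x 0 with rfl | h
  · simp [quadForm]
  · exact (posdef_apply hQ h).le

end
end Ry2
namespace Ry3
open Ry Ry2

section
variable {Q : Matrix (Fin 2) (Fin 2) ℝ}

def homSet (Q : Matrix (Fin 2) (Fin 2) ℝ) : Set ℝ :=
  {r | ∃ v : Fin 2 → ℤ, v ≠ 0 ∧ r = quadForm Q (intCast v)}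

lemma homMin_def (Q : Matrix (Fin 2) (Fin 2) ℝ) : homMin Q = sInf (homSet Q) := rfl

lemma homSet_nonempty (Q : Matrix (Fin 2) (Fin 2) ℝ) : (homSet Q).Nonempty := by
  refine ⟨quadForm Q (intCast ![1,0]), ![1,0], ?_, rfl⟩
  intro h; have := congrFun h 0; simp at this

lemma intCast_ne_zero {v : Fin 2 → ℤ} (hv : v ≠ 0) : intCast v ≠ 0 := by
  intro h
  apply hv
  funext i
  have := congrFun h i
  simp [intCast] at this
  simpa using this

lemma homSet_bddBelow (hQ : IsPQF Q) : BddBelow (homSet Q) := by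
  refine ⟨0, ?_⟩
  rintro r ⟨v, hv, rfl⟩
  exact quad_nonneg hQ _

lemma int_norm_ge {v : Fin 2 → ℤ} (hv : v ≠ 0) :
    1 ≤ (intCast v 0) ^ 2 + (intCast v 1) ^ 2 := by
  have h : v 0 ≠ 0 ∨ v 1 ≠ 0 := by
    by_contra h
    push_neg at h
    apply hv
    funext i
    fin_cases i <;> simp [h.1, h.2]
  have h0 : ∀ n : ℤ, n ≠ 0 → (1:ℝ) ≤ (n:ℝ)^2 := by
    intro n hn
    have h1 : (1:ℤ) ≤ |n| := Int.one_le_abs hn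
    have : (1:ℤ) ≤ n^2 := by nlinarith [sq_abs n]
    calc (1:ℝ) = ((1:ℤ):ℝ) := by norm_num
    _ ≤ ((n^2 : ℤ) : ℝ) := by exact_mod_cast this
    _ = (n:ℝ)^2 := by push_cast; ring
  simp only [intCast]
  rcases h with h | h
  · nlinarith [sq_nonneg ((v 1 : ℝ)), h0 _ h]
  · nlinarith [sq_nonneg ((v 0 : ℝ)), h0 _ h]

lemma homMin_ge (hQ : IsPQF Q) : c0 Q ≤ homMin Q := by
  apply le_csInf (homSet_nonempty Q)
  rintro r ⟨v, hv, rfl⟩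
  calc c0 Q = c0 Q * 1 := by ring
  _ ≤ c0 Q * ((intCast v 0)^2 + (intCast v 1)^2) := by
      have := c0_pos hQ
      nlinarith [int_norm_ge hv]
  _ ≤ quadForm Q (intCast v) := quad_lower hQ _

lemma homMin_pos (hQ : IsPQF Q) : 0 < homMin Q := lt_of_lt_of_le (c0_pos hQ) (homMin_ge hQ)

lemma homMin_le (hQ : IsPQF Q) {v : Fin 2 → ℤ} (hv : v ≠ 0) :
    homMin Q ≤ quadForm Q (intCast v) :=
  csInf_le (homSet_bddBelow hQ) ⟨v, hv, rfl⟩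

lemma exists_min_vec (hQ : IsPQF Q) :
    ∃ v1 : Fin 2 → ℤ, v1 ≠ 0 ∧ quadForm Q (intCast v1) = homMin Q := by
  set lam := homMin Q with hlam
  set A : Set (Fin 2 → ℤ) := {v | v ≠ 0 ∧ quadForm Q (intCast v) ≤ lam + 1} with hA
  -- A nonempty
  have hAne : A.Nonempty := by
    by_contra h
    rw [Set.not_nonempty_iff_eq_empty] at h
    have : lam + 1 ≤ lam := by
      rw [hlam, homMin_def]
      apply le_csInf (homSet_nonempty Q)
      rintro r ⟨v, hv, rfl⟩
      by_contra hr
      push_neg at hr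
      have : v ∈ A := ⟨hv, hr.le⟩
      rw [h] at this
      exact this
    linarith
  -- A finite
  have hAfin : A.Finite := by
    obtain ⟨N, hN⟩ := exists_nat_ge ((lam + 1) / c0 Q)
    apply Set.Finite.subset (Set.finite_Icc (fun _ : Fin 2 => -(N:ℤ)) (fun _ => (N:ℤ)))
    rintro v ⟨hv, hle⟩
    have hlow := quad_lower hQ (intCast v)
    have hc0 := c0_pos hQ
    have hbound : (intCast v 0)^2 + (intCast v 1)^2 ≤ (lam+1) / c0 Q := by
      rw [le_div_iff₀ hc0]
      nlinarith
    simp only [intCast] at hlow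
    have h0 : ((v 0 : ℝ))^2 ≥ 0 := sq_nonneg _
    have h1 : ((v 1 : ℝ))^2 ≥ 0 := sq_nonneg _
    have keyR : ∀ i : Fin 2, ((v i : ℝ))^2 ≤ (N:ℝ) := by
      have k0 : ((v 0 : ℝ))^2 ≤ (N:ℝ) := by
        have : ((v 0 : ℝ))^2 ≤ (lam+1)/c0 Q := by rw [le_div_iff₀ hc0]; nlinarith
        linarith [hN]
      have k1 : ((v 1 : ℝ))^2 ≤ (N:ℝ) := by
        have : ((v 1 : ℝ))^2 ≤ (lam+1)/c0 Q := by rw [le_div_iff₀ hc0]; nlinarith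
        linarith [hN]
      intro i; fin_cases i
      · exact k0
      · exact k1
    have keyZ : ∀ i : Fin 2, (v i)^2 ≤ (N:ℤ) := by
      intro i
      have := keyR i
      exact_mod_cast this
    have keyabs : ∀ i : Fin 2, |v i| ≤ (N:ℤ) := by
      intro i
      rcases eq_or_ne (v i) 0 with h | h
      · simp only [h, abs_zero]
        exact_mod_cast Nat.zero_le N
      · have h1 := Int.one_le_abs h
        have h2 := keyZ i
        nlinarith [sq_abs (v i)]
    constructor <;> intro i <;> simp only
    · linarith [(abs_le.1 (keyabs i)).1]
    · linarith [(abs_le.1 (keyabs i)).2]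
  obtain ⟨v1, hv1A, hmin⟩ := Set.exists_min_image A (fun v => quadForm Q (intCast v)) hAfin hAne
  refine ⟨v1, hv1A.1, le_antisymm ?_ (homMin_le hQ hv1A.1)⟩
  rw [hlam, homMin_def]
  apply le_csInf (homSet_nonempty Q)
  rintro r ⟨w, hw, rfl⟩
  by_cases hcase : quadForm Q (intCast w) ≤ lam + 1
  · exact hmin w ⟨hw, hcase⟩
  · push_neg at hcase
    linarith [hv1A.2]

end
end Ry3
namespace Ry4
open Ry Ry2 Ry3

section
variable {Q : Matrix (Fin 2) (Fin 2) ℝ}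

lemma quad_smul (Q : Matrix (Fin 2) (Fin 2) ℝ) (r : ℝ) (y : Fin 2 → ℝ) :
    quadForm Q (r • y) = r^2 * quadForm Q y := by
  simp only [quadForm_eq, Pi.smul_apply, smul_eq_mul]; ring

/-- the three-point identity -/
lemma three_point (hQ : IsPQF Q) (p q r : Fin 2 → ℝ) :
    quadForm Q (p + q + r) + (quadForm Q (p - q) + quadForm Q (p - r) + quadForm Q (q - r))
      = 3 * (quadForm Q p + quadForm Q q + quadForm Q r) := by
  simp only [quadForm_eq, Pi.add_apply, Pi.sub_apply, hsym hQ]; ring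

/-- cube bound: each point is within `C Q` of a lattice point -/
def CC (Q : Matrix (Fin 2) (Fin 2) ℝ) : ℝ := |Q 0 0| + |Q 0 1| + |Q 1 0| + |Q 1 1|

lemma cube_bound (Q : Matrix (Fin 2) (Fin 2) ℝ) (x : Fin 2 → ℝ) :
    ∃ v : Fin 2 → ℤ, quadForm Q (x - intCast v) ≤ CC Q := by
  refine ⟨fun i => ⌊x i⌋, ?_⟩
  have h0 : ∀ i : Fin 2, 0 ≤ x i - ⌊x i⌋ := fun i => by
    linarith [Int.floor_le (x i)]
  have h1 : ∀ i : Fin 2, x i - ⌊x i⌋ ≤ 1 := fun i => by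
    linarith [Int.lt_floor_add_one (x i)]
  rw [quadForm_eq]
  simp only [Pi.sub_apply, intCast, CC]
  have e0 := h0 0; have e1 := h0 1; have f0 := h1 0; have f1 := h1 1
  have key : ∀ q p : ℝ, 0 ≤ p → p ≤ 1 → q * p ≤ |q| := by
    intro q p hp hp1
    calc q * p ≤ |q| * p := mul_le_mul_of_nonneg_right (le_abs_self q) hp
    _ ≤ |q| * 1 := mul_le_mul_of_nonneg_left hp1 (abs_nonneg q)
    _ = |q| := mul_one _
  have k00 := key (Q 0 0) _ (mul_nonneg e0 e0) (by nlinarith)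
  have k01 := key (Q 0 1) _ (mul_nonneg e0 e1) (by nlinarith)
  have k10 := key (Q 1 0) _ (mul_nonneg e1 e0) (by nlinarith)
  have k11 := key (Q 1 1) _ (mul_nonneg e1 e1) (by nlinarith)
  linarith

lemma CC_nonneg (Q : Matrix (Fin 2) (Fin 2) ℝ) : 0 ≤ CC Q := by
  have := abs_nonneg (Q 0 0); have := abs_nonneg (Q 0 1)
  have := abs_nonneg (Q 1 0); have := abs_nonneg (Q 1 1)
  simp only [CC]; linarith

lemma iInf_bddBelow (hQ : IsPQF Q) (x : Fin 2 → ℝ) :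
    BddBelow (Set.range fun v : Fin 2 → ℤ => quadForm Q (x - intCast v)) := by
  refine ⟨0, ?_⟩
  rintro r ⟨v, rfl⟩
  exact quad_nonneg hQ _

lemma iInf_le_CC (hQ : IsPQF Q) (x : Fin 2 → ℝ) :
    (⨅ v : Fin 2 → ℤ, quadForm Q (x - intCast v)) ≤ CC Q := by
  obtain ⟨v, hv⟩ := cube_bound Q x
  exact le_trans (ciInf_le (iInf_bddBelow hQ x) v) hv

lemma inhom_bddAbove (hQ : IsPQF Q) :
    BddAbove (Set.range fun x : Fin 2 → ℝ => ⨅ v : Fin 2 → ℤ, quadForm Q (x - intCast v)) := by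
  refine ⟨CC Q, ?_⟩
  rintro r ⟨x, rfl⟩
  exact iInf_le_CC hQ x

end
end Ry4
namespace Ry5
open Ry Ry2 Ry3 Ry4 Filter

section
variable {Q : Matrix (Fin 2) (Fin 2) ℝ}

set_option maxHeartbeats 1000000 in
lemma mu_ge (hQ : IsPQF Q) : homMin Q / 3 ≤ inhomMin Q := by
  classical
  obtain ⟨v1, hv1ne, hv1min⟩ := exists_min_vec hQ
  set lam := homMin Q with hlam
  have hlampos : 0 < lam := homMin_pos hQ
  have hb' : Q 1 0 = Q 0 1 := hsym hQ
  set m0 : ℝ := Q 0 0 * (v1 0 : ℝ) + Q 0 1 * (v1 1 : ℝ) with hm0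
  set m1 : ℝ := Q 0 1 * (v1 0 : ℝ) + Q 1 1 * (v1 1 : ℝ) with hm1
  set nv : Fin 2 → ℝ := ![-m1, m0] with hnv
  set xline : ℝ → (Fin 2 → ℝ) :=
    fun t => ![(v1 0 : ℝ)/2 - t * m1, (v1 1 : ℝ)/2 + t * m0] with hxline
  -- nv nonzero
  have hw_expand : quadForm Q (intCast v1) = (v1 0 : ℝ) * m0 + (v1 1 : ℝ) * m1 := by
    rw [quadForm_eq]; simp only [intCast, hb', hm0, hm1]; ring
  have hQn : 0 < quadForm Q nv := by
    apply posdef_apply hQ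
    intro h
    have h0 := congrFun h 0
    have h1 := congrFun h 1
    simp only [hnv, Matrix.cons_val_zero, Matrix.cons_val_one, Matrix.head_cons,
      Pi.zero_apply, neg_eq_zero] at h0 h1
    have : quadForm Q (intCast v1) = 0 := by rw [hw_expand, h0, h1]; ring
    exact absurd this (ne_of_gt (posdef_apply hQ (intCast_ne_zero hv1ne)))
  set h : ℝ → ℝ := fun t => lam/4 + t^2 * quadForm Q nv with hh
  -- key line identities
  have hx0 : ∀ t, quadForm Q (xline t) = h t := by
    intro t
    rw [hh]
    simp only [← hv1min]
    simp only [quadForm_eq, hxline, hnv, intCast, Matrix.cons_val_zero, Matrix.cons_val_one,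
      Matrix.head_cons, hb', hm0, hm1]
    ring
  have hx1 : ∀ t, quadForm Q (xline t - intCast v1) = h t := by
    intro t
    rw [hh]
    simp only [← hv1min]
    simp only [quadForm_eq, hxline, hnv, intCast, Pi.sub_apply, Matrix.cons_val_zero,
      Matrix.cons_val_one, Matrix.head_cons, hb', hm0, hm1]
    ring
  -- continuity
  have hcont : ∀ v : Fin 2 → ℤ, Continuous (fun t => quadForm Q (xline t - intCast v)) := by
    intro v
    simp only [quadForm_eq, Pi.sub_apply, hxline, intCast, Matrix.cons_val_zero,
      Matrix.cons_val_one, Matrix.head_cons]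
    fun_prop
  have hconth : Continuous h := by
    rw [hh]; fun_prop
  -- the set S
  set S : Set ℝ := {t | 0 ≤ t ∧ ∀ v : Fin 2 → ℤ, h t ≤ quadForm Q (xline t - intCast v)}
    with hS
  -- 0 ∈ S
  have hS0 : (0:ℝ) ∈ S := by
    refine ⟨le_refl 0, fun v => ?_⟩
    set u2 : Fin 2 → ℤ := fun i => v1 i - 2 * v i with hu2
    have hne : u2 ≠ 0 := by
      intro hz
      have hv1c : ∀ i, v1 i = 2 * v i := by
        intro i
        have := congrFun hz i
        simp only [hu2, Pi.zero_apply] at this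
        omega
      have hvne : v ≠ 0 := by
        intro h0
        apply hv1ne
        funext i
        rw [hv1c i, h0]; simp
      have r0 : ((v1 0 : ℤ) : ℝ) = 2 * ((v 0 : ℤ) : ℝ) := by rw [hv1c 0]; push_cast; ring
      have r1 : ((v1 1 : ℤ) : ℝ) = 2 * ((v 1 : ℤ) : ℝ) := by rw [hv1c 1]; push_cast; ring
      have h4 : quadForm Q (intCast v1) = 4 * quadForm Q (intCast v) := by
        simp only [quadForm_eq, intCast, r0, r1]
        ring
      have hge := homMin_le hQ hvne
      rw [hv1min] at h4
      rw [← hlam] at hge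
      nlinarith
    have hval : quadForm Q (xline 0 - intCast v) = quadForm Q (intCast u2) / 4 := by
      have r0 : (intCast u2) 0 = ((v1 0 : ℤ) : ℝ) - 2 * ((v 0 : ℤ) : ℝ) := by
        simp only [intCast, hu2]; push_cast; ring
      have r1 : (intCast u2) 1 = ((v1 1 : ℤ) : ℝ) - 2 * ((v 1 : ℤ) : ℝ) := by
        simp only [intCast, hu2]; push_cast; ring
      rw [quadForm_eq, quadForm_eq, r0, r1]
      simp only [Pi.sub_apply, hxline, intCast, Matrix.cons_val_zero, Matrix.cons_val_one,
        Matrix.head_cons, hb']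
      ring
    have hge := homMin_le hQ hne
    rw [← hlam] at hge
    have hzero : h 0 = lam / 4 := by rw [hh]; simp
    rw [hzero, hval]
    linarith
  -- S is bounded above
  have hSbdd : BddAbove S := by
    refine ⟨((CC Q - lam/4)/(quadForm Q nv) + 1)/2, ?_⟩
    intro t ht
    obtain ⟨htpos, hall⟩ := ht
    obtain ⟨v, hv⟩ := cube_bound Q (xline t)
    have h1 := le_trans (hall v) hv
    rw [hh] at h1
    simp only at h1
    have ht2 : t^2 ≤ (CC Q - lam/4)/(quadForm Q nv) := by
      rw [le_div_iff₀ hQn]; linarith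
    nlinarith [sq_nonneg (t - 1)]
  -- S is closed
  have hSclosed : IsClosed S := by
    have : S = Set.Ici 0 ∩ ⋂ v : Fin 2 → ℤ,
        {t | h t ≤ quadForm Q (xline t - intCast v)} := by
      ext t
      simp only [hS, Set.mem_setOf_eq, Set.mem_inter_iff, Set.mem_Ici, Set.mem_iInter]
    rw [this]
    exact isClosed_Ici.inter (isClosed_iInter fun v => isClosed_le hconth (hcont v))
  set tstar := sSup S with htstar
  have htsS : tstar ∈ S := hSclosed.csSup_mem ⟨0, hS0⟩ hSbdd
  have htspos : 0 ≤ tstar := htsS.1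
  -- exists third point u
  have hthird : ∃ u : Fin 2 → ℤ, u ≠ 0 ∧ u ≠ v1 ∧
      quadForm Q (xline tstar - intCast u) = h tstar := by
    by_contra hcon
    push_neg at hcon
    have hstrict : ∀ u : Fin 2 → ℤ, u ≠ 0 → u ≠ v1 →
        h tstar < quadForm Q (xline tstar - intCast u) := by
      intro u hu0 hu1
      exact lt_of_le_of_ne (htsS.2 u) (fun he => hcon u hu0 hu1 he.symm)
    set H := lam/4 + (tstar+1)^2 * quadForm Q nv with hH
    have hHpos : 0 < H := by positivity
    set M : ℝ := ((|(v1 0 : ℝ)| + |(v1 1 : ℝ)|)/2 + (tstar+1) * (|m0| + |m1|)) with hM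
    have hMnn : 0 ≤ M := by positivity
    have hc0 := c0_pos hQ
    have hc0ne : c0 Q ≠ 0 := ne_of_gt hc0
    set D : ℝ := Real.sqrt ((H+1)/c0 Q) with hD
    have hDnn : 0 ≤ D := Real.sqrt_nonneg _
    have hDsq : c0 Q * D^2 = H + 1 := by
      rw [hD, Real.sq_sqrt (div_nonneg (by linarith) hc0.le), mul_comm,
        div_mul_cancel₀ _ hc0ne]
    obtain ⟨N, hN⟩ := exists_nat_ge (M + D)
    set U : Finset (Fin 2 → ℤ) := Finset.Icc (fun _ => -(N:ℤ)) (fun _ => (N:ℤ)) with hU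
    -- xline bound on [0, tstar+1]
    have hxbound : ∀ t : ℝ, 0 ≤ t → t ≤ tstar + 1 → ∀ i : Fin 2, |xline t i| ≤ M := by
      intro t h0t ht1
      have hm0a : 0 ≤ |m0| := abs_nonneg _
      have hm1a : 0 ≤ |m1| := abs_nonneg _
      have hv0a := abs_nonneg ((v1 0 : ℝ))
      have hv1a := abs_nonneg ((v1 1 : ℝ))
      rw [Fin.forall_fin_two]
      constructor
      · show |xline t 0| ≤ M
        rw [hxline, hM]
        simp only [Matrix.cons_val_zero]
        calc |(v1 0 : ℝ)/2 - t * m1| ≤ |(v1 0 : ℝ)/2| + |t * m1| := abs_sub _ _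
        _ = |(v1 0 : ℝ)|/2 + t * |m1| := by
            rw [abs_mul, abs_div, abs_of_nonneg h0t]; norm_num
        _ ≤ (|(v1 0 : ℝ)| + |(v1 1 : ℝ)|)/2 + (tstar+1) * (|m0| + |m1|) := by nlinarith
      · show |xline t 1| ≤ M
        rw [hxline, hM]
        simp only [Matrix.cons_val_one, Matrix.head_cons]
        calc |(v1 1 : ℝ)/2 + t * m0| ≤ |(v1 1 : ℝ)/2| + |t * m0| := abs_add_le _ _
        _ = |(v1 1 : ℝ)|/2 + t * |m0| := by
            rw [abs_mul, abs_div, abs_of_nonneg h0t]; norm_num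
        _ ≤ (|(v1 0 : ℝ)| + |(v1 1 : ℝ)|)/2 + (tstar+1) * (|m0| + |m1|) := by nlinarith
    -- far points have large quadForm on the whole interval
    have hfar : ∀ u : Fin 2 → ℤ, u ∉ U → ∀ t : ℝ, 0 ≤ t → t ≤ tstar + 1 →
        H < quadForm Q (xline t - intCast u) := by
      intro u hu t h0t ht1
      have hex : ∃ i : Fin 2, (N:ℝ) < |(u i : ℝ)| := by
        by_contra hno
        push_neg at hno
        apply hu
        rw [hU, Finset.mem_Icc]
        refine ⟨fun i => ?_, fun i => ?_⟩
        · show -(N:ℤ) ≤ u i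
          have h2 := (abs_le.1 (hno i)).1
          have h3 : -((N:ℝ)) ≤ ((u i : ℤ) : ℝ) := by linarith
          exact_mod_cast h3
        · show u i ≤ (N:ℤ)
          have h2 := (abs_le.1 (hno i)).2
          exact_mod_cast h2
      have hlow := quad_lower hQ (xline t - intCast u)
      have hsq0 : (0:ℝ) ≤ ((xline t - intCast u) 0)^2 := sq_nonneg _
      have hsq1 : (0:ℝ) ≤ ((xline t - intCast u) 1)^2 := sq_nonneg _
      have hkey : ∀ i : Fin 2, (N:ℝ) < |(u i : ℝ)| →
          D^2 < ((xline t - intCast u) i)^2 := by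
        intro i hi
        have hxb := hxbound t h0t ht1 i
        have hyi : D < |xline t i - (u i : ℝ)| := by
          calc D = (M + D) - M := by ring
          _ ≤ (N:ℝ) - M := by linarith
          _ < |(u i : ℝ)| - |xline t i| := by linarith
          _ ≤ |xline t i - (u i : ℝ)| := by
              rw [abs_sub_comm]
              linarith [abs_sub_abs_le_abs_sub ((u i : ℝ)) (xline t i)]
        have : ((xline t - intCast u) i) = xline t i - (u i : ℝ) := by
          simp [Pi.sub_apply, intCast]
        rw [this, ← sq_abs (xline t i - (u i : ℝ))]
        exact pow_lt_pow_left₀ hyi hDnn (by norm_num)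
      have hDlt : D^2 < ((xline t - intCast u) 0)^2 + ((xline t - intCast u) 1)^2 := by
        rw [Fin.exists_fin_two] at hex
        rcases hex with hi | hi
        · linarith [hkey 0 hi]
        · linarith [hkey 1 hi]
      calc H = (H + 1) - 1 := by ring
      _ < c0 Q * D^2 := by rw [hDsq]; norm_num
      _ ≤ c0 Q * (((xline t - intCast u) 0)^2 + ((xline t - intCast u) 1)^2) := by
          nlinarith
      _ ≤ quadForm Q (xline t - intCast u) := hlow
    -- eventually all near points stay strictly above
    have hev1 : ∀ᶠ t in nhds tstar, ∀ u ∈ U, u ≠ 0 → u ≠ v1 →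
        h t < quadForm Q (xline t - intCast u) := by
      rw [Filter.eventually_all_finset]
      intro u hu
      by_cases hu0 : u = 0
      · simp [hu0]
      by_cases hu1 : u = v1
      · simp [hu1]
      have hopen : IsOpen {t : ℝ | h t < quadForm Q (xline t - intCast u)} :=
        isOpen_lt hconth (hcont u)
      have hmem : tstar ∈ {t : ℝ | h t < quadForm Q (xline t - intCast u)} :=
        hstrict u hu0 hu1
      filter_upwards [hopen.mem_nhds hmem] with t ht _ _
      exact ht
    have hev2 : ∀ᶠ t in nhds tstar, t < tstar + 1 := by
      have : tstar ∈ Set.Iio (tstar + 1) := by simp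
      filter_upwards [isOpen_Iio.mem_nhds this] with t ht
      exact ht
    have hev3 : ∀ᶠ t in nhdsWithin tstar (Set.Ioi tstar),
        (∀ u ∈ U, u ≠ 0 → u ≠ v1 → h t < quadForm Q (xline t - intCast u)) ∧
        t < tstar + 1 ∧ tstar < t := by
      have hmono := (hev1.and hev2).filter_mono
        (nhdsWithin_le_nhds (s := Set.Ioi tstar))
      filter_upwards [hmono, self_mem_nhdsWithin] with t ht ht2
      exact ⟨ht.1, ht.2, ht2⟩
    obtain ⟨t, ⟨hta, htb, htc⟩⟩ := hev3.exists
    have htS : t ∈ S := by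
      refine ⟨by linarith, fun v => ?_⟩
      by_cases hv0 : v = 0
      · rw [hv0]
        have : intCast (0 : Fin 2 → ℤ) = 0 := by funext i; simp [intCast]
        rw [this, sub_zero, hx0]
      by_cases hvv1 : v = v1
      · rw [hvv1, hx1]
      by_cases hvU : v ∈ U
      · exact (hta v hvU hv0 hvv1).le
      · have hf := hfar v hvU t (by linarith) (by linarith)
        have hhtH : h t ≤ H := by
          rw [hh, hH]
          simp only
          have h1 : t^2 ≤ (tstar+1)^2 := by nlinarith
          nlinarith
        linarith
    have : t ≤ tstar := le_csSup hSbdd htS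
    linarith
  -- use the three point identity
  obtain ⟨u, hu0, hu1, huval⟩ := hthird
  have hq1 : quadForm Q (xline tstar) = h tstar := hx0 tstar
  have hq2 : quadForm Q (xline tstar - intCast v1) = h tstar := hx1 tstar
  have hd12 : quadForm Q (xline tstar - (xline tstar - intCast v1)) = lam := by
    have heq : xline tstar - (xline tstar - intCast v1) = intCast v1 := by
      funext i; simp [Pi.sub_apply]
    rw [heq, hv1min]
  have hd13 : lam ≤ quadForm Q (xline tstar - (xline tstar - intCast u)) := by
    have heq : xline tstar - (xline tstar - intCast u) = intCast u := by
      funext i; simp [Pi.sub_apply]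
    rw [heq, hlam]
    exact homMin_le hQ hu0
  have hd23 : lam ≤
      quadForm Q ((xline tstar - intCast v1) - (xline tstar - intCast u)) := by
    have heq : (xline tstar - intCast v1) - (xline tstar - intCast u)
        = intCast (u - v1) := by
      funext i; simp only [Pi.sub_apply, intCast]; push_cast; ring
    rw [heq, hlam]
    apply homMin_le hQ
    intro hz
    apply hu1
    funext i
    have := congrFun hz i
    simp only [Pi.sub_apply, Pi.zero_apply] at this
    omega
  have hident := three_point hQ (xline tstar) (xline tstar - intCast v1)
    (xline tstar - intCast u)
  have hsum_nonneg := quad_nonneg hQ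
    ((xline tstar) + (xline tstar - intCast v1) + (xline tstar - intCast u))
  rw [hq1, hq2, huval, hd12] at hident
  have hR2ge : lam / 3 ≤ h tstar := by
    simp only [hh] at hident ⊢
    linarith [hident, hsum_nonneg, hd13, hd23]
  have hinf_ge : h tstar ≤ ⨅ v : Fin 2 → ℤ, quadForm Q (xline tstar - intCast v) :=
    le_ciInf fun v => htsS.2 v
  calc lam / 3 ≤ h tstar := hR2ge
  _ ≤ ⨅ v : Fin 2 → ℤ, quadForm Q (xline tstar - intCast v) := hinf_ge
  _ ≤ inhomMin Q := le_ciSup (inhom_bddAbove hQ) (xline tstar)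

end
end Ry5
namespace Ry6
open Ry Ry2 Ry3 Ry4

lemma QA00 : QAstar 2 0 0 = 2 := by simp [QAstar]
lemma QA01 : QAstar 2 0 1 = -1 := by simp [QAstar]
lemma QA10 : QAstar 2 1 0 = -1 := by simp [QAstar]
lemma QA11 : QAstar 2 1 1 = 2 := by simp [QAstar]

lemma quadQA (x : Fin 2 → ℝ) :
    quadForm (QAstar 2) x = 2*(x 0)^2 - 2*(x 0)*(x 1) + 2*(x 1)^2 := by
  rw [quadForm_eq, QA00, QA01, QA10, QA11]; ring

lemma hQA : IsPQF (QAstar 2) := by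
  constructor
  · unfold Matrix.IsSymm
    ext i j
    fin_cases i <;> fin_cases j <;> simp [QAstar, Matrix.transpose]
  · apply Matrix.PosDef.of_dotProduct_mulVec_pos
    · unfold Matrix.IsHermitian
      ext i j
      fin_cases i <;> fin_cases j <;> simp [QAstar, Matrix.conjTranspose, Matrix.transpose]
    · intro x hx
      have hval : (star x) ⬝ᵥ ((QAstar 2) *ᵥ x) = quadForm (QAstar 2) x := by
        simp [quadForm, dotProduct, star]
      rw [hval, quadQA]
      have h : x 0 ≠ 0 ∨ x 1 ≠ 0 := by
        by_contra h
        push_neg at h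
        apply hx
        funext i
        fin_cases i
        · exact h.1
        · exact h.2
      rcases h with h | h
      · have : 0 < (x 0)^2 := pow_pos (abs_pos.mpr h) 2 |>.trans_le (by rw [sq_abs])
        nlinarith [sq_nonneg (x 0 - x 1), sq_nonneg (x 1)]
      · have : 0 < (x 1)^2 := pow_pos (abs_pos.mpr h) 2 |>.trans_le (by rw [sq_abs])
        nlinarith [sq_nonneg (x 0 - x 1), sq_nonneg (x 0)]

lemma homMinQA : homMin (QAstar 2) = 2 := by
  rw [homMin_def]
  apply IsLeast.csInf_eq
  constructor
  · refine ⟨![1, 0], ?_, ?_⟩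
    · intro h; have := congrFun h 0; simp at this
    · rw [quadQA]
      simp [intCast]
  · rintro r ⟨v, hv, rfl⟩
    rw [quadQA]
    have h : v 0 ≠ 0 ∨ v 1 ≠ 0 := by
      by_contra h
      push_neg at h
      apply hv
      funext i
      fin_cases i
      · exact h.1
      · exact h.2
    have hsq : ∀ n : ℤ, n ≠ 0 → (1:ℝ) ≤ ((n:ℤ):ℝ)^2 := by
      intro n hn
      have h1 : (1:ℤ) ≤ |n| := Int.one_le_abs hn
      have h2 : (1:ℤ) ≤ n^2 := by nlinarith [sq_abs n]
      exact_mod_cast h2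
    have hI0 : (intCast v 0) = ((v 0 : ℤ):ℝ) := rfl
    have hI1 : (intCast v 1) = ((v 1 : ℤ):ℝ) := rfl
    rw [hI0, hI1]
    -- integer quadratic form at least 2
    have hint : (2:ℤ) ≤ 2*(v 0)^2 - 2*(v 0)*(v 1) + 2*(v 1)^2 := by
      rcases h with h | h
      · have := Int.one_le_abs h
        nlinarith [sq_nonneg (v 0 - v 1), sq_nonneg (v 1), sq_abs (v 0)]
      · have := Int.one_le_abs h
        nlinarith [sq_nonneg (v 0 - v 1), sq_nonneg (v 0), sq_abs (v 1)]
    calc (2:ℝ) ≤ ((2*(v 0)^2 - 2*(v 0)*(v 1) + 2*(v 1)^2 : ℤ) : ℝ) := by exact_mod_cast hint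
    _ = 2*((v 0 : ℤ):ℝ)^2 - 2*((v 0 : ℤ):ℝ)*((v 1 : ℤ):ℝ) + 2*((v 1 : ℤ):ℝ)^2 := by
        push_cast; ring

/-- the key real inequality for the second rounding candidate -/
lemma key2 (α t b c : ℝ) (h1 : |α| ≤ 1/2) (h2 : |t| ≤ 1/2)
    (hb : b^2 = (1/2 - |α|)^2) (htc : c^2 = (1 - |t|)^2)
    (hbig : 2/3 < 2*α^2 + 3/2*t^2) : 2*b^2 + 3/2*c^2 ≤ 2/3 := by
  have hp0 : 0 ≤ |α| := abs_nonneg _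
  have hq0 : 0 ≤ |t| := abs_nonneg _
  have hα2 : α^2 = |α|^2 := (sq_abs α).symm
  have ht2 : t^2 = |t|^2 := (sq_abs t).symm
  set p := |α| with hp
  set q := |t| with hq
  rw [hb, htc]
  rw [hα2, ht2] at hbig
  have m1 : 0 ≤ (1/2 - p) * p := mul_nonneg (by linarith) hp0
  have m2 : 0 ≤ 3/2*q^2 - 2/3 + p := by nlinarith
  have hq13 : 1/3 ≤ q := by
    by_contra hcon
    push_neg at hcon
    nlinarith [mul_pos (by linarith : (0:ℝ) < 1/3 - q) (by linarith : (0:ℝ) < 1/3 + q)]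
  have m3 : 0 ≤ (q - 1/3)*(2/3 - q) := mul_nonneg (by linarith) (by linarith)
  nlinarith [m1, m2, m3]

lemma inhom_upper (y : Fin 2 → ℝ) :
    ∃ v : Fin 2 → ℤ, quadForm (QAstar 2) (y - intCast v) ≤ 2/3 := by
  classical
  set y0 := y 0 with hy0
  set y1 := y 1 with hy1
  set k : ℤ := round (y0 - y1) with hk
  set t0 : ℝ := y0 - y1 - k with ht0def
  have ht0 : |t0| ≤ 1/2 := by rw [ht0def]; exact abs_sub_round (y0 - y1)
  set as : ℝ := (y0 + y1 + k)/2 with has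
  set a : ℤ := round as with ha
  set α : ℝ := as - a with hαdef
  have hα : |α| ≤ 1/2 := by rw [hαdef]; exact abs_sub_round as
  -- value of candidate 1
  have value1 : quadForm (QAstar 2) (y - intCast ![a, a - k]) = 2*α^2 + 3/2*t0^2 := by
    rw [quadQA]
    simp only [Pi.sub_apply, intCast, Matrix.cons_val_zero, Matrix.cons_val_one,
      Matrix.head_cons, hαdef, has, ht0def, ← hy0, ← hy1]
    push_cast
    ring
  by_cases hc : 2*α^2 + 3/2*t0^2 ≤ 2/3
  · exact ⟨![a, a - k], by rw [value1]; exact hc⟩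
  · push_neg at hc
    set s : ℤ := if 0 ≤ t0 then 1 else -1 with hs
    set a' : ℤ := if 0 ≤ α * (s:ℝ) then a + s else a with ha'
    set α' : ℝ := (y0 + y1 + ((k+s):ℤ))/2 - a' with hα'def
    set t' : ℝ := y0 - y1 - ((k+s):ℤ) with ht'def
    have value2 : quadForm (QAstar 2) (y - intCast ![a', a' - (k+s)])
        = 2*α'^2 + 3/2*t'^2 := by
      rw [quadQA]
      simp only [Pi.sub_apply, intCast, Matrix.cons_val_zero, Matrix.cons_val_one,
        Matrix.head_cons, hα'def, ht'def, ← hy0, ← hy1]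
      push_cast
      ring
    have ht' : t'^2 = (1 - |t0|)^2 := by
      by_cases hts : 0 ≤ t0
      · rw [abs_of_nonneg hts, ht'def, hs, if_pos hts, ht0def]
        push_cast
        ring
      · push_neg at hts
        rw [abs_of_neg hts, ht'def, hs, if_neg (not_le.mpr hts), ht0def]
        push_cast
        ring
    have hα'2 : α'^2 = (1/2 - |α|)^2 := by
      by_cases hts : 0 ≤ t0
      · have hs1 : s = 1 := by rw [hs, if_pos hts]
        by_cases hcond : 0 ≤ α * (s:ℝ)
        · have hαpos : 0 ≤ α := by
            rw [hs1] at hcond; simpa using hcond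
          rw [abs_of_nonneg hαpos, hα'def, ha', if_pos hcond, hs1, hαdef, has]
          push_cast
          ring
        · have hαneg : α < 0 := by
            rw [hs1] at hcond; push_neg at hcond; simpa using hcond
          rw [abs_of_neg hαneg, hα'def, ha', if_neg hcond, hs1, hαdef, has]
          push_cast
          ring
      · have hs1 : s = -1 := by rw [hs, if_neg hts]
        by_cases hcond : 0 ≤ α * (s:ℝ)
        · have hαneg : α ≤ 0 := by
            rw [hs1] at hcond
            push_cast at hcond
            nlinarith
          rw [abs_of_nonpos hαneg, hα'def, ha', if_pos hcond, hs1, hαdef, has]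
          push_cast
          ring
        · have hαpos : 0 ≤ α := by
            rw [hs1] at hcond
            push_cast at hcond
            push_neg at hcond
            nlinarith
          rw [abs_of_nonneg hαpos, hα'def, ha', if_neg hcond, hs1, hαdef, has]
          push_cast
          ring
    refine ⟨![a', a' - (k+s)], ?_⟩
    rw [value2]
    exact key2 α t0 α' t' hα ht0 hα'2 ht' hc

lemma inhom_lower_aux (v : Fin 2 → ℤ) :
    2/3 ≤ quadForm (QAstar 2) (![(1:ℝ)/3, -1/3] - intCast v) := by
  rw [quadQA]
  simp only [Pi.sub_apply, intCast, Matrix.cons_val_zero, Matrix.cons_val_one,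
    Matrix.head_cons]
  set p := v 0 with hp
  set q := v 1 with hq
  -- A = 1/3 - p, B = -1/3 - q
  rcases eq_or_ne (p + q) 0 with hpq | hpq
  · -- q = -p
    have hq' : q = -p := by omega
    have h3 : (1 - 3*p : ℤ) ≠ 0 := by omega
    have h1 : (1:ℤ) ≤ |1 - 3*p| := Int.one_le_abs h3
    have h2 : (1:ℤ) ≤ (1 - 3*p)^2 := by nlinarith [sq_abs (1 - 3*p)]
    have h2R : (1:ℝ) ≤ ((1:ℝ) - 3*(p:ℝ))^2 := by exact_mod_cast h2
    rw [hq']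
    push_cast
    nlinarith
  · have h1 : (1:ℤ) ≤ |p + q| := Int.one_le_abs hpq
    have h2 : (1:ℤ) ≤ (p + q)^2 := by nlinarith [sq_abs (p + q)]
    have h2R : (1:ℝ) ≤ ((p:ℝ) + (q:ℝ))^2 := by exact_mod_cast h2
    have h3 : (2 - 3*(p - q) : ℤ) ≠ 0 := by omega
    have h4 : (1:ℤ) ≤ (2 - 3*(p-q))^2 := by nlinarith [sq_abs (2 - 3*(p-q)), Int.one_le_abs h3]
    have h4R : (1:ℝ) ≤ ((2:ℝ) - 3*((p:ℝ) - (q:ℝ)))^2 := by exact_mod_cast h4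
    nlinarith

lemma inhomMinQA : inhomMin (QAstar 2) = 2/3 := by
  apply le_antisymm
  · apply ciSup_le
    intro x
    obtain ⟨v, hv⟩ := inhom_upper x
    exact le_trans (ciInf_le (iInf_bddBelow hQA x) v) hv
  · have h1 : (2:ℝ)/3 ≤ ⨅ v : Fin 2 → ℤ,
        quadForm (QAstar 2) (![(1:ℝ)/3, -1/3] - intCast v) :=
      le_ciInf inhom_lower_aux
    exact le_trans h1 (le_ciSup (inhom_bddAbove hQA) ![(1:ℝ)/3, -1/3])

end Ry6
/-- Ryshkov's theorem: every binary PQF has packing-covering constant at least `2/√3`,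
attained by `Q_{A*_2}`. -/
theorem packing_covering_optimal_dim2 :
    (∀ Q : Matrix (Fin 2) (Fin 2) ℝ, IsPQF Q →
      2 / Real.sqrt 3 ≤ pcConst Q) ∧
    pcConst (QAstar 2) = 2 / Real.sqrt 3 := by
  constructor
  · intro Q hQ
    have hmu := Ry5.mu_ge hQ
    have hlam := Ry3.homMin_pos hQ
    unfold pcConst
    have h13 : (3:ℝ)⁻¹ ≤ inhomMin Q / homMin Q := by
      rw [le_div_iff₀ hlam]; linarith
    have hs := Real.sqrt_le_sqrt h13
    rw [Real.sqrt_inv] at hs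
    rw [div_eq_mul_inv]
    linarith
  · unfold pcConst
    rw [Ry6.homMinQA, Ry6.inhomMinQA]
    rw [show (2:ℝ)/3/2 = 3⁻¹ by norm_num, Real.sqrt_inv, div_eq_mul_inv]
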